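/- Let (ι, A, I, z, x) be a GI datum, (ι', A, I, z', x') a Kramers–Wannier dual datum for it, m ≥ 2 an integer, and Q the periodic bulk qubit type. For all a, b : Q → ZMod 2, if the operator X_a Z_b commutes with every operator in the periodic bulk stabilizer set, then there exist ε ∈ {1, −1} and a finite list of operators from the periodic bulk stabilizer set whose product equals ε · X_a Z_b. -/

import Mathlib

noncomputable section

/-- The `ZMod 2`-valued dot product `u·v = ∑ j, u j * v j`. -/
def dotp {ι : Type} [Fintype ι] (u v : ι → ZMod 2) : ZMod 2 := ∑ j, u j * v j

/-- The X-type Pauli operator `X_u`: the permutation matrix with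
`(X_u)_{s,t} = 1` iff `s = t + u`. -/
def Xop {ι : Type} [Fintype ι] (u : ι → ZMod 2) :
    Matrix (ι → ZMod 2) (ι → ZMod 2) ℂ :=
  Matrix.of fun s t => if s = t + u then 1 else 0

/-- The Z-type Pauli operator `Z_v`: the diagonal matrix with
`(Z_v)_{s,s} = (-1)^(v·s)`. -/
def Zop {ι : Type} [Fintype ι] (v : ι → ZMod 2) :
    Matrix (ι → ZMod 2) (ι → ZMod 2) ℂ :=
  Matrix.of fun s t => if s = t then (-1 : ℂ) ^ (dotp v s).val else 0

/-- The standard inner product on the `ι`-qubit Hilbert space `(ι → ZMod 2) → ℂ`. -/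
def qInner {ι : Type} [Fintype ι] [DecidableEq ι] (ψ φ : (ι → ZMod 2) → ℂ) : ℂ :=
  ∑ s, (starRingEnd ℂ) (ψ s) * φ s

/-- The subspace of vectors fixed by every operator in a given set of matrices. -/
def fixedSpace {ι : Type} [Fintype ι] [DecidableEq ι]
    (Ms : Set (Matrix (ι → ZMod 2) (ι → ZMod 2) ℂ)) :
    Submodule ℂ ((ι → ZMod 2) → ℂ) :=
  ⨅ M ∈ Ms, LinearMap.ker (Matrix.mulVecLin M - LinearMap.id)
/-- The periodic bulk qubit type: `m` odd layers (copies of `ι`) and `m` even layers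
(copies of `ι'`), cyclically arranged (odd layer `l` between even layers `l` and `l+1`). -/
abbrev BulkQ (m : ℕ) (ι ι' : Type) : Type := (ZMod m × ι) ⊕ (ZMod m × ι')

/-- `w@o_l`: the vector equal to `w` on odd layer `l` and `0` elsewhere. -/
def atOdd {m : ℕ} {ι ι' : Type} (l : ZMod m) (w : ι → ZMod 2) : BulkQ m ι ι' → ZMod 2
  | Sum.inl p => if p.1 = l then w p.2 else 0
  | Sum.inr _ => 0

/-- `w'@e_l`: the vector equal to `w'` on even layer `l` and `0` elsewhere. -/
def atEven {m : ℕ} {ι ι' : Type} (l : ZMod m) (w' : ι' → ZMod 2) : BulkQ m ι ι' → ZMod 2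
  | Sum.inl _ => 0
  | Sum.inr p => if p.1 = l then w' p.2 else 0

/-- The periodic bulk stabilizer set: Z-suspension operators, X-suspension operators,
and the layer-wise local/compatible symmetry operators of the GI datum and its dual. -/
def periodicBulkSet (m : ℕ) [NeZero m] (ι ι' A I : Type)
    [Fintype ι] [DecidableEq ι] [Fintype ι'] [DecidableEq ι'] [Fintype A] [Fintype I]
    (z : A → ι → ZMod 2) (x : I → ι → ZMod 2)
    (z' : A → ι' → ZMod 2) (x' : I → ι' → ZMod 2) :
    Set (Matrix (BulkQ m ι ι' → ZMod 2) (BulkQ m ι ι' → ZMod 2) ℂ) :=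
  {M | (∃ (α : A) (l : ZMod m),
          M = Zop (atEven l (z' α) + atOdd l (z α) + atEven (l + 1) (z' α))) ∨
       (∃ (i : I) (l : ZMod m),
          M = Xop (atOdd (l - 1) (x i) + atEven l (x' i) + atOdd l (x i))) ∨
       (∃ (l : ZMod m) (v : ι → ZMod 2),
          (∀ i, dotp v (x i) = 0) ∧ M = Zop (atOdd l v)) ∨
       (∃ (l : ZMod m) (u : ι → ZMod 2),
          (∀ α, dotp u (z α) = 0) ∧
          (∀ v : ι → ZMod 2, (∀ i, dotp v (x i) = 0) → dotp u v = 0) ∧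
          M = Xop (atOdd l u)) ∨
       (∃ (l : ZMod m) (u' : ι' → ZMod 2),
          (∀ α, dotp u' (z' α) = 0) ∧ M = Xop (atEven l u')) ∨
       (∃ (l : ZMod m) (v' : ι' → ZMod 2),
          v' ∈ Submodule.span (ZMod 2) (Set.range z') ∧
          (∀ i, dotp v' (x' i) = 0) ∧ M = Zop (atEven l v'))}
set_option linter.unusedSectionVars false

section dotplemmas
variable {ι : Type} [Fintype ι]

lemma dotp_comm (u v : ι → ZMod 2) : dotp u v = dotp v u := by
  unfold dotp; exact Finset.sum_congr rfl fun j _ => mul_comm _ _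

lemma dotp_add_left (u v w : ι → ZMod 2) : dotp (u + v) w = dotp u w + dotp v w := by
  unfold dotp; rw [← Finset.sum_add_distrib]
  exact Finset.sum_congr rfl fun j _ => add_mul _ _ _

lemma dotp_add_right (u v w : ι → ZMod 2) : dotp u (v + w) = dotp u v + dotp u w := by
  rw [dotp_comm, dotp_add_left, dotp_comm v u, dotp_comm w u]

lemma dotp_zero_right (u : ι → ZMod 2) : dotp u 0 = 0 := by
  unfold dotp; simp

lemma dotp_zero_left (u : ι → ZMod 2) : dotp 0 u = 0 := by
  rw [dotp_comm]; exact dotp_zero_right u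

lemma dotp_smul_left (c : ZMod 2) (u w : ι → ZMod 2) : dotp (c • u) w = c * dotp u w := by
  unfold dotp; rw [Finset.mul_sum]
  exact Finset.sum_congr rfl fun j _ => by simp [mul_assoc]

lemma dotp_sum_left {κ : Type} (s : Finset κ) (f : κ → ι → ZMod 2) (w : ι → ZMod 2) :
    dotp (∑ k ∈ s, f k) w = ∑ k ∈ s, dotp (f k) w := by
  classical
  induction s using Finset.induction_on with
  | empty => simp [dotp_zero_left]
  | insert _ _ h ih => rw [Finset.sum_insert h, Finset.sum_insert h, dotp_add_left, ih]

lemma negpow_add (a b : ZMod 2) :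
    ((-1 : ℂ)) ^ ((a + b).val) = (-1 : ℂ) ^ a.val * (-1 : ℂ) ^ b.val := by
  rw [ZMod.val_add, ← pow_add, neg_one_pow_eq_pow_mod_two, neg_one_pow_eq_pow_mod_two (n := a.val + b.val), Nat.mod_mod_of_dvd _ (dvd_refl 2)]

lemma zmod2_cases (d : ZMod 2) : d = 0 ∨ d = 1 := by revert d; decide

end dotplemmas

section matrixlemmas
variable {n : Type} [Fintype n] [DecidableEq n]

lemma Xop_zero : Xop (0 : n → ZMod 2) = 1 := by
  ext s t
  simp [Xop, Matrix.one_apply, eq_comm]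

lemma Zop_zero : Zop (0 : n → ZMod 2) = 1 := by
  ext s t
  simp [Zop, Matrix.one_apply, dotp_zero_left]

lemma XZ_apply (u v : n → ZMod 2) (s t : n → ZMod 2) :
    (Xop u * Zop v) s t = if s = t + u then (-1 : ℂ) ^ (dotp v t).val else 0 := by
  rw [Matrix.mul_apply]
  have : ∀ r, Xop u s r * Zop v r t = if r = t then (if s = t + u then (-1 : ℂ) ^ (dotp v t).val else 0) else 0 := by
    intro r
    by_cases h : r = t
    · subst h; simp [Xop, Zop]
    · simp [Zop, h]
  simp_rw [this]
  rw [Finset.sum_ite_eq']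
  simp

lemma XZ_mul_XZ (u v u' v' : n → ZMod 2) :
    (Xop u * Zop v) * (Xop u' * Zop v') =
      ((-1 : ℂ) ^ (dotp v u').val) • (Xop (u + u') * Zop (v + v')) := by
  ext s t
  rw [Matrix.mul_apply]
  have : ∀ r, (Xop u * Zop v) s r * (Xop u' * Zop v') r t =
      if r = t + u' then (if s = t + u' + u then (-1:ℂ) ^ (dotp v (t + u')).val * (-1:ℂ) ^ (dotp v' t).val else 0) else 0 := by
    intro r
    by_cases h : r = t + u'
    · subst h; rw [XZ_apply, XZ_apply]
      by_cases h2 : s = t + u' + u <;> simp [h2]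
    · simp [XZ_apply, h]
  simp_rw [this]
  rw [Finset.sum_ite_eq']
  simp only [Finset.mem_univ, if_true, Matrix.smul_apply, XZ_apply, smul_eq_mul]
  have hcond : (s = t + u' + u) ↔ (s = t + (u + u')) := by
    constructor <;> intro h <;> rw [h] <;> ring
  by_cases h : s = t + u' + u
  · rw [if_pos h, if_pos (hcond.mp h), dotp_add_right, negpow_add, dotp_add_left v v' t, negpow_add]
    ring
  · rw [if_neg h, if_neg (fun hh => h (hcond.mpr hh)), mul_zero]

lemma scalar_eq_one (u v : n → ZMod 2) (c : ℂ)
    (h : c • (Xop u * Zop v) = Xop u * Zop v) : c = 1 := by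
  have h1 := congrArg (fun M => M (0 + u) 0) h
  simp only [Matrix.smul_apply, XZ_apply, smul_eq_mul, if_pos rfl, dotp_zero_right,
    ZMod.val_zero, pow_zero, mul_one] at h1
  simpa using h1

lemma comm_to_dotpX (a b u : n → ZMod 2)
    (h : (Xop a * Zop b) * Xop u = Xop u * (Xop a * Zop b)) : dotp b u = 0 := by
  have hu : Xop u = Xop u * Zop (0 : n → ZMod 2) := by rw [Zop_zero, mul_one]
  rw [hu, XZ_mul_XZ, XZ_mul_XZ, dotp_zero_left] at h
  simp only [dotp_zero_left, dotp_zero_right, ZMod.val_zero, pow_zero, one_smul, add_zero,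
    zero_add, add_comm u a] at h
  have hone := scalar_eq_one (a + u) b _ h
  rcases zmod2_cases (dotp b u) with h0 | h1
  · exact h0
  · exfalso; rw [h1] at hone
    have : (1 : ZMod 2).val = 1 := by decide
    rw [this] at hone; norm_num at hone

lemma comm_to_dotpZ (a b w : n → ZMod 2)
    (h : (Xop a * Zop b) * Zop w = Zop w * (Xop a * Zop b)) : dotp a w = 0 := by
  have hw : Zop w = Xop (0 : n → ZMod 2) * Zop w := by rw [Xop_zero, one_mul]
  rw [hw, XZ_mul_XZ, XZ_mul_XZ, dotp_zero_right] at h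
  simp only [dotp_zero_left, dotp_zero_right, ZMod.val_zero, pow_zero, one_smul, add_zero,
    zero_add, add_comm w b] at h
  have hone := scalar_eq_one a (b + w) _ h.symm
  rw [dotp_comm]
  rcases zmod2_cases (dotp w a) with h0 | h1
  · exact h0
  · exfalso; rw [h1] at hone
    have : (1 : ZMod 2).val = 1 := by decide
    rw [this] at hone; norm_num at hone

end matrixlemmas

/-- Lemma A : double-annihilator style representation. -/
lemma lemA {n κ : Type} [Fintype n] [DecidableEq n] [Fintype κ]
    (f : κ → n → ZMod 2) (w : n → ZMod 2)
    (h : ∀ v : n → ZMod 2, (∀ k, dotp v (f k) = 0) → dotp w v = 0) :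
    ∃ c : κ → ZMod 2, w = ∑ k, c k • f k := by
  by_contra hc
  push_neg at hc
  have hw : w ∉ Submodule.span (ZMod 2) (Set.range f) := by
    intro hmem
    obtain ⟨c, hcc⟩ := (Submodule.mem_span_range_iff_exists_fun (ZMod 2)).mp hmem
    exact hc c hcc.symm
  set W := Submodule.span (ZMod 2) (Set.range f)
  have hq : Submodule.Quotient.mk (p := W) w ≠ 0 := by
    simpa [Submodule.Quotient.mk_eq_zero] using hw
  have := (Module.forall_dual_apply_eq_zero_iff (ZMod 2) (Submodule.Quotient.mk (p := W) w)).not.mpr hq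
  push_neg at this
  obtain ⟨ψ, hψ⟩ := this
  set φ : Module.Dual (ZMod 2) (n → ZMod 2) := ψ.comp W.mkQ with hφdef
  have hφw : φ w ≠ 0 := hψ
  have hrepr : ∀ u : n → ZMod 2, dotp (fun j => φ (Pi.single j 1)) u = φ u := by
    intro u
    have hu : u = ∑ j, Pi.single j (u j) := (Finset.univ_sum_single u).symm
    rw [dotp]
    conv_rhs => rw [hu]
    rw [map_sum]
    refine Finset.sum_congr rfl fun j _ => ?_
    have : Pi.single j (u j) = u j • (Pi.single j (1 : ZMod 2) : n → ZMod 2) := by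
      funext k
      by_cases hk : k = j
      · subst hk; simp
      · simp [Pi.single_eq_of_ne hk]
    rw [this, map_smul, smul_eq_mul, mul_comm]
  set v : n → ZMod 2 := fun j => φ (Pi.single j 1)
  have hvf : ∀ k, dotp v (f k) = 0 := by
    intro k
    rw [hrepr (f k)]
    have : f k ∈ W := Submodule.subset_span ⟨k, rfl⟩
    simp [hφdef, (Submodule.Quotient.mk_eq_zero W).mpr this]
  have := h v hvf
  rw [dotp_comm, hrepr w] at this
  exact hφw this


section cyclic
variable {m : ℕ} [NeZero m]

lemma zmod_natCast_val (k : ZMod m) : ((k.val : ZMod m)) = k := ZMod.natCast_rightInverse k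

/-- key cyclic partial-sum relation -/
lemma cyc (c : ZMod m → ZMod 2) (k : ZMod m) :
    (∑ j ∈ Finset.range k.val, c (j : ZMod m)) + (∑ j ∈ Finset.range (k+1).val, c (j : ZMod m))
      = c k + (if k + 1 = 0 then ∑ j ∈ Finset.range m, c (j : ZMod m) else 0) := by
  have hklt := ZMod.val_lt k
  have hone : 1 ≤ m := Nat.one_le_iff_ne_zero.mpr (NeZero.ne m)
  by_cases hk : k + 1 = 0
  · rw [if_pos hk]
    have hm1 : (((m - 1 : ℕ) : ZMod m)) + 1 = 0 := by
      have h1 : (((m - 1 : ℕ) : ZMod m)) + 1 = (((m - 1) + 1 : ℕ) : ZMod m) := by push_cast; ring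
      have h2 : m - 1 + 1 = m := Nat.succ_pred_eq_of_pos (Nat.pos_of_ne_zero (NeZero.ne m))
      rw [h1, h2, ZMod.natCast_self]
    have hkm : k = ((m - 1 : ℕ) : ZMod m) := by
      have := hk.trans hm1.symm
      exact add_right_cancel this
    have hkval : k.val = m - 1 := by
      rw [hkm, ZMod.val_cast_of_lt (Nat.sub_lt (Nat.pos_of_ne_zero (NeZero.ne m)) one_pos)]
    have hk1 : (k+1).val = 0 := by rw [hk, ZMod.val_zero]
    rw [hkval, hk1]
    have hsplit : ∑ j ∈ Finset.range m, c (j : ZMod m)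
        = (∑ j ∈ Finset.range (m-1), c (j : ZMod m)) + c ((m-1 : ℕ) : ZMod m) := by
      have h2 : m - 1 + 1 = m := Nat.succ_pred_eq_of_pos (Nat.pos_of_ne_zero (NeZero.ne m))
      rw [← Finset.sum_range_succ, h2]
    rw [hsplit, ← hkm]
    simp only [Finset.range_zero, Finset.sum_empty, add_zero]
    have hz : ∀ s y : ZMod 2, s = y + (s + y) := by decide
    exact hz _ _
  · rw [if_neg hk]
    have hk1 : (k+1).val = k.val + 1 := by
      have hne : k.val + 1 ≠ m := by
        intro hh
        apply hk
        have : ((k.val + 1 : ℕ) : ZMod m) = 0 := by rw [hh, ZMod.natCast_self]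
        rwa [Nat.cast_add, Nat.cast_one, zmod_natCast_val] at this
      have hlt : k.val + 1 < m := lt_of_le_of_ne hklt hne
      calc (k+1).val = ((k.val + 1 : ℕ) : ZMod m).val := by
            rw [Nat.cast_add, Nat.cast_one, zmod_natCast_val]
          _ = k.val + 1 := ZMod.val_cast_of_lt hlt
    rw [hk1, Finset.sum_range_succ, zmod_natCast_val]
    have hz : ∀ s y : ZMod 2, s + (s + y) = y + 0 := by decide
    exact hz _ _

/-- a ZMod m indexed sequence with g (k+1) = g k is constant -/
lemma zmod_const {X : Type*} (g : ZMod m → X) (h : ∀ k, g (k + 1) = g k) (l : ZMod m) :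
    g l = g 0 := by
  have key : ∀ n : ℕ, g (n : ZMod m) = g 0 := by
    intro n
    induction n with
    | zero => simp
    | succ n ih => rw [Nat.cast_add, Nat.cast_one, h, ih]
  rw [← zmod_natCast_val l, key]

lemma sum_indicator_neg_one {X : Type*} [AddCommMonoid X] (E : X) :
    (∑ k : ZMod m, if k + 1 = 0 then E else 0) = E := by
  have : ∀ k : ZMod m, (if k + 1 = 0 then E else 0) = (if k = -1 then E else 0) := by
    intro k
    congr 1
    simp [eq_comm, eq_neg_iff_add_eq_zero]
  simp_rw [this]
  rw [Finset.sum_ite_eq']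
  simp

end cyclic


section bulkdot
variable {m : ℕ} [NeZero m] {ι ι' : Type} [Fintype ι] [Fintype ι']

lemma dotp_eq_sum {κ : Type} [Fintype κ] (v w : κ → ZMod 2) : dotp v w = ∑ k, v k * w k := rfl

lemma dotp_atOdd (a : BulkQ m ι ι' → ZMod 2) (l : ZMod m) (w : ι → ZMod 2) :
    dotp a (atOdd l w) = dotp (fun j => a (Sum.inl (l, j))) w := by
  unfold dotp
  rw [Fintype.sum_sum_type]
  have h2 : ∑ p : ZMod m × ι', a (Sum.inr p) * atOdd l w (Sum.inr p) = 0 := by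
    simp [atOdd]
  rw [h2, add_zero, Fintype.sum_prod_type]
  have h1 : ∀ k : ZMod m, ∑ j : ι, a (Sum.inl (k, j)) * (atOdd l w : BulkQ m ι ι' → ZMod 2) (Sum.inl (k, j))
      = if k = l then ∑ j : ι, a (Sum.inl (l, j)) * w j else 0 := by
    intro k
    by_cases hk : k = l
    · subst hk; simp [atOdd]
    · simp [atOdd, hk]
  simp_rw [h1]
  rw [Finset.sum_ite_eq']
  simp

lemma dotp_atEven (a : BulkQ m ι ι' → ZMod 2) (l : ZMod m) (w : ι' → ZMod 2) :
    dotp a (atEven l w) = dotp (fun j => a (Sum.inr (l, j))) w := by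
  unfold dotp
  rw [Fintype.sum_sum_type]
  have h2 : ∑ p : ZMod m × ι, a (Sum.inl p) * atEven l w (Sum.inl p) = 0 := by
    simp [atEven]
  rw [h2, zero_add, Fintype.sum_prod_type]
  have h1 : ∀ k : ZMod m, ∑ j : ι', a (Sum.inr (k, j)) * (atEven l w : BulkQ m ι ι' → ZMod 2) (Sum.inr (k, j))
      = if k = l then ∑ j : ι', a (Sum.inr (l, j)) * w j else 0 := by
    intro k
    by_cases hk : k = l
    · subst hk; simp [atEven]
    · simp [atEven, hk]
  simp_rw [h1]
  rw [Finset.sum_ite_eq']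
  simp

end bulkdot

section pprod
variable {n : Type} [Fintype n] [DecidableEq n]

def PaProd (S : Set (Matrix (n → ZMod 2) (n → ZMod 2) ℂ)) (u v : n → ZMod 2) : Prop :=
  ∃ ε : ℂ, (ε = 1 ∨ ε = -1) ∧
    ∃ L : List (Matrix (n → ZMod 2) (n → ZMod 2) ℂ),
      (∀ M ∈ L, M ∈ S) ∧ L.prod = ε • (Xop u * Zop v)

lemma PaProd_zero (S : Set (Matrix (n → ZMod 2) (n → ZMod 2) ℂ)) : PaProd S 0 0 := by
  refine ⟨1, Or.inl rfl, [], by simp, ?_⟩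
  simp [Xop_zero, Zop_zero]

lemma PaProd_X (S : Set (Matrix (n → ZMod 2) (n → ZMod 2) ℂ)) {u : n → ZMod 2}
    (h : Xop u ∈ S) : PaProd S u 0 := by
  refine ⟨1, Or.inl rfl, [Xop u], ?_, ?_⟩
  · intro M hM
    rw [List.mem_singleton] at hM
    rw [hM]; exact h
  · simp [Zop_zero]

lemma PaProd_Z (S : Set (Matrix (n → ZMod 2) (n → ZMod 2) ℂ)) {v : n → ZMod 2}
    (h : Zop v ∈ S) : PaProd S 0 v := by
  refine ⟨1, Or.inl rfl, [Zop v], ?_, ?_⟩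
  · intro M hM
    rw [List.mem_singleton] at hM
    rw [hM]; exact h
  · simp [Xop_zero]

lemma PaProd_add (S : Set (Matrix (n → ZMod 2) (n → ZMod 2) ℂ)) {u v u' v' : n → ZMod 2}
    (h1 : PaProd S u v) (h2 : PaProd S u' v') : PaProd S (u + u') (v + v') := by
  obtain ⟨ε₁, hε₁, L₁, hL₁, hp₁⟩ := h1
  obtain ⟨ε₂, hε₂, L₂, hL₂, hp₂⟩ := h2
  have hpow : ((-1:ℂ) ^ (dotp v u').val = 1) ∨ ((-1:ℂ) ^ (dotp v u').val = -1) := by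
    rcases Nat.even_or_odd (dotp v u').val with he | ho
    · exact Or.inl he.neg_one_pow
    · exact Or.inr ho.neg_one_pow
  refine ⟨ε₁ * ε₂ * (-1:ℂ) ^ (dotp v u').val, ?_, L₁ ++ L₂, ?_, ?_⟩
  · rcases hε₁ with h | h <;> rcases hε₂ with h' | h' <;> rcases hpow with hp | hp <;>
      rw [h, h', hp] <;> norm_num
  · intro M hM
    rcases List.mem_append.mp hM with h | h
    exacts [hL₁ M h, hL₂ M h]
  · rw [List.prod_append, hp₁, hp₂, smul_mul_assoc, mul_smul_comm, XZ_mul_XZ,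
      smul_smul, smul_smul, mul_assoc]

lemma PaProd_sum (S : Set (Matrix (n → ZMod 2) (n → ZMod 2) ℂ)) {γ : Type}
    (s : Finset γ) (f g : γ → (n → ZMod 2))
    (h : ∀ k ∈ s, PaProd S (f k) (g k)) : PaProd S (∑ k ∈ s, f k) (∑ k ∈ s, g k) := by
  classical
  induction s using Finset.induction_on with
  | empty => simpa using PaProd_zero S
  | insert _ _ ha ih =>
    rw [Finset.sum_insert ha, Finset.sum_insert ha]
    exact PaProd_add S (h _ (Finset.mem_insert_self _ _))
      (ih fun k hk => h k (Finset.mem_insert_of_mem hk))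

end pprod

/-- any Pauli operator `X_a Z_b` on the periodic bulk that commutes with
every operator in the periodic bulk stabilizer set equals, up to a sign `ε = ±1`, a
finite product of operators from that set. -/
theorem statement13 (m : ℕ) [NeZero m] (hm : 2 ≤ m) (ι ι' A I : Type)
    [Fintype ι] [DecidableEq ι] [Fintype ι'] [DecidableEq ι'] [Fintype A] [Fintype I]
    (z : A → ι → ZMod 2) (x : I → ι → ZMod 2)
    (z' : A → ι' → ZMod 2) (x' : I → ι' → ZMod 2)
    (hdual : ∀ (α : A) (i : I), dotp (z α) (x i) = dotp (z' α) (x' i)) :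
    ∀ a b : BulkQ m ι ι' → ZMod 2,
      (∀ M ∈ periodicBulkSet m ι ι' A I z x z' x',
        (Xop a * Zop b) * M = M * (Xop a * Zop b)) →
      ∃ ε : ℂ, (ε = 1 ∨ ε = -1) ∧
        ∃ L : List (Matrix (BulkQ m ι ι' → ZMod 2) (BulkQ m ι ι' → ZMod 2) ℂ),
          (∀ M ∈ L, M ∈ periodicBulkSet m ι ι' A I z x z' x') ∧
          L.prod = ε • (Xop a * Zop b) := by
  intro a b hcomm
  classical
  -- ZMod 2 helper facts
  have z2a : ∀ p q s : ZMod 2, p + q + s = 0 → p + s = q := by decide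
  have z2b : ∀ p q : ZMod 2, p + (p + q) = q := by decide
  have z2c : ∀ p : ZMod 2, p + p = 0 := by decide
  have z2d : ∀ p q : ZMod 2, p + q = 0 → q = p := by decide
  have z2e : ∀ p q : ZMod 2, p = p + q + q := by decide
  have z2f : ∀ p q : ZMod 2, p = q + (p + q) := by decide
  -- ★ facts from commutation
  have star1 : ∀ (α : A) (l : ZMod m),
      dotp (fun j => a (Sum.inr (l, j))) (z' α) + dotp (fun j => a (Sum.inl (l, j))) (z α)
        + dotp (fun j => a (Sum.inr (l + 1, j))) (z' α) = 0 := by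
    intro α l
    have hmem : Zop (atEven l (z' α) + atOdd l (z α) + atEven (l + 1) (z' α))
        ∈ periodicBulkSet m ι ι' A I z x z' x' := Or.inl ⟨α, l, rfl⟩
    have h := comm_to_dotpZ a b _ (hcomm _ hmem)
    rwa [dotp_add_right, dotp_add_right, dotp_atEven, dotp_atOdd, dotp_atEven] at h
  have star2 : ∀ (i : I) (l : ZMod m),
      dotp (fun j => b (Sum.inl (l - 1, j))) (x i) + dotp (fun j => b (Sum.inr (l, j))) (x' i)
        + dotp (fun j => b (Sum.inl (l, j))) (x i) = 0 := by
    intro i l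
    have hmem : Xop (atOdd (l - 1) (x i) + atEven l (x' i) + atOdd l (x i))
        ∈ periodicBulkSet m ι ι' A I z x z' x' := Or.inr (Or.inl ⟨i, l, rfl⟩)
    have h := comm_to_dotpX a b _ (hcomm _ hmem)
    rwa [dotp_add_right, dotp_add_right, dotp_atOdd, dotp_atEven, dotp_atOdd] at h
  have star3 : ∀ (l : ZMod m) (v : ι → ZMod 2), (∀ i, dotp v (x i) = 0) →
      dotp (fun j => a (Sum.inl (l, j))) v = 0 := by
    intro l v hv
    have hmem : Zop (atOdd l v) ∈ periodicBulkSet m ι ι' A I z x z' x' :=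
      Or.inr (Or.inr (Or.inl ⟨l, v, hv, rfl⟩))
    have h := comm_to_dotpZ a b _ (hcomm _ hmem)
    rwa [dotp_atOdd] at h
  have star4 : ∀ (l : ZMod m) (u : ι → ZMod 2), (∀ α, dotp u (z α) = 0) →
      (∀ v : ι → ZMod 2, (∀ i, dotp v (x i) = 0) → dotp u v = 0) →
      dotp (fun j => b (Sum.inl (l, j))) u = 0 := by
    intro l u h1 h2
    have hmem : Xop (atOdd l u) ∈ periodicBulkSet m ι ι' A I z x z' x' :=
      Or.inr (Or.inr (Or.inr (Or.inl ⟨l, u, h1, h2, rfl⟩)))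
    have h := comm_to_dotpX a b _ (hcomm _ hmem)
    rwa [dotp_atOdd] at h
  have star5 : ∀ (l : ZMod m) (u' : ι' → ZMod 2), (∀ α, dotp u' (z' α) = 0) →
      dotp (fun j => b (Sum.inr (l, j))) u' = 0 := by
    intro l u' h1
    have hmem : Xop (atEven l u') ∈ periodicBulkSet m ι ι' A I z x z' x' :=
      Or.inr (Or.inr (Or.inr (Or.inr (Or.inl ⟨l, u', h1, rfl⟩))))
    have h := comm_to_dotpX a b _ (hcomm _ hmem)
    rwa [dotp_atEven] at h
  have star6 : ∀ (l : ZMod m) (v' : ι' → ZMod 2),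
      v' ∈ Submodule.span (ZMod 2) (Set.range z') → (∀ i, dotp v' (x' i) = 0) →
      dotp (fun j => a (Sum.inr (l, j))) v' = 0 := by
    intro l v' h1 h2
    have hmem : Zop (atEven l v') ∈ periodicBulkSet m ι ι' A I z x z' x' :=
      Or.inr (Or.inr (Or.inr (Or.inr (Or.inr ⟨l, v', h1, h2, rfl⟩))))
    have h := comm_to_dotpZ a b _ (hcomm _ hmem)
    rwa [dotp_atEven] at h
  -- representations of layer components
  have hclA : ∀ l : ZMod m, ∃ cl : I → ZMod 2,
      (fun j => a (Sum.inl (l, j))) = ∑ i, cl i • x i := by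
    intro l
    exact lemA x _ (fun v hv => star3 l v hv)
  choose c hc using hclA
  have hclB : ∀ l : ZMod m, ∃ cl : A → ZMod 2,
      (fun j => b (Sum.inr (l, j))) = ∑ α, cl α • z' α := by
    intro l
    exact lemA z' _ (fun u' hu' => star5 l u' hu')
  choose c' hc' using hclB
  set e : I → ZMod 2 := fun i => ∑ j ∈ Finset.range m, c (j : ZMod m) i with hedef
  set r : ι → ZMod 2 := ∑ i, e i • x i with hrdef
  set e' : A → ZMod 2 := fun α => ∑ j ∈ Finset.range m, c' ((j : ZMod m) + 1) α with he'def
  set r' : ι' → ZMod 2 := ∑ α, e' α • z' α with hr'def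
  have hdd : ∀ (i : I) (α : A), dotp (x' i) (z' α) = dotp (x i) (z α) := by
    intro i α
    rw [dotp_comm, ← hdual, dotp_comm]
  -- choice of the constant shift t (even layers, X side)
  have htEx : ∃ t : I → ZMod 2,
      (fun α => dotp (fun j => a (Sum.inr ((0 : ZMod m), j))) (z' α))
        = ∑ i, t i • (fun α => dotp (x' i) (z' α)) := by
    apply lemA
    intro v hv
    have hw'x : ∀ i, dotp (∑ α, v α • z' α) (x' i) = 0 := by
      intro i
      rw [dotp_sum_left]
      simp_rw [dotp_smul_left]
      have h0 := hv i
      rw [dotp_eq_sum] at h0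
      calc ∑ α, v α * dotp (z' α) (x' i)
          = ∑ α, v α * dotp (x' i) (z' α) :=
            Finset.sum_congr rfl fun α _ => by rw [dotp_comm (z' α) (x' i)]
        _ = 0 := h0
    have hw'mem : (∑ α, v α • z' α) ∈ Submodule.span (ZMod 2) (Set.range z') :=
      Submodule.sum_smul_mem _ _ (fun α _ => Submodule.subset_span ⟨α, rfl⟩)
    have h6 := star6 0 _ hw'mem hw'x
    rw [dotp_comm] at h6
    rw [dotp_sum_left] at h6
    simp_rw [dotp_smul_left] at h6
    rw [dotp_eq_sum]
    calc ∑ α, dotp (fun j => a (Sum.inr ((0 : ZMod m), j))) (z' α) * v α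
        = ∑ α, v α * dotp (z' α) (fun j => a (Sum.inr ((0 : ZMod m), j))) :=
          Finset.sum_congr rfl fun α _ => by
            rw [dotp_comm (z' α) _, mul_comm]
      _ = 0 := h6
  obtain ⟨t, ht⟩ := htEx
  -- choice of the constant shift t' (odd layers, Z side)
  have ht'Ex : ∃ t' : A → ZMod 2,
      (fun i => dotp (fun j => b (Sum.inl ((0 : ZMod m), j))) (x i))
        = ∑ α, t' α • (fun i => dotp (z α) (x i)) := by
    apply lemA
    intro v hv
    have hu1 : ∀ α, dotp (∑ i, v i • x i) (z α) = 0 := by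
      intro α
      rw [dotp_sum_left]
      simp_rw [dotp_smul_left]
      have h0 := hv α
      rw [dotp_eq_sum] at h0
      calc ∑ i, v i * dotp (x i) (z α)
          = ∑ i, v i * dotp (z α) (x i) :=
            Finset.sum_congr rfl fun i _ => by rw [dotp_comm (x i) (z α)]
        _ = 0 := h0
    have hu2 : ∀ v₀ : ι → ZMod 2, (∀ i, dotp v₀ (x i) = 0) → dotp (∑ i, v i • x i) v₀ = 0 := by
      intro v₀ hv₀
      rw [dotp_sum_left]
      simp_rw [dotp_smul_left]
      refine Finset.sum_eq_zero fun i _ => ?_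
      rw [dotp_comm (x i) v₀, hv₀ i, mul_zero]
    have h4 := star4 0 _ hu1 hu2
    rw [dotp_comm] at h4
    rw [dotp_sum_left] at h4
    simp_rw [dotp_smul_left] at h4
    rw [dotp_eq_sum]
    calc ∑ i, dotp (fun j => b (Sum.inl ((0 : ZMod m), j))) (x i) * v i
        = ∑ i, v i * dotp (x i) (fun j => b (Sum.inl ((0 : ZMod m), j))) :=
          Finset.sum_congr rfl fun i _ => by
            rw [dotp_comm (x i) _, mul_comm]
      _ = 0 := h4
  obtain ⟨t', ht'⟩ := ht'Ex
  -- the cumulative coefficients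
  set d : ZMod m → I → ZMod 2 :=
    fun l i => t i + ∑ j ∈ Finset.range l.val, c (j : ZMod m) i with hddef
  set d' : ZMod m → A → ZMod 2 :=
    fun l α => t' α + ∑ j ∈ Finset.range l.val, c' ((j : ZMod m) + 1) α with hd'def
  have hd : ∀ (k : ZMod m) (i : I),
      d k i + d (k + 1) i = c k i + (if k + 1 = 0 then e i else 0) := by
    intro k i
    have hcyc := cyc (fun j => c j i) k
    rw [hddef]
    simp only []
    calc (t i + ∑ j ∈ Finset.range k.val, c (j : ZMod m) i)
          + (t i + ∑ j ∈ Finset.range (k+1).val, c (j : ZMod m) i)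
        = (∑ j ∈ Finset.range k.val, c (j : ZMod m) i)
          + ∑ j ∈ Finset.range (k+1).val, c (j : ZMod m) i := by
          have : ∀ p q s : ZMod 2, (p + q) + (p + s) = q + s := by decide
          exact this _ _ _
      _ = c k i + (if k + 1 = 0 then e i else 0) := by
          rw [hcyc, hedef]
  have hd' : ∀ (k : ZMod m) (α : A),
      d' k α + d' (k + 1) α = c' (k + 1) α + (if k + 1 = 0 then e' α else 0) := by
    intro k α
    have hcyc := cyc (fun j => c' (j + 1) α) k
    rw [hd'def]
    simp only []
    calc (t' α + ∑ j ∈ Finset.range k.val, c' ((j : ZMod m) + 1) α)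
          + (t' α + ∑ j ∈ Finset.range (k+1).val, c' ((j : ZMod m) + 1) α)
        = (∑ j ∈ Finset.range k.val, c' ((j : ZMod m) + 1) α)
          + ∑ j ∈ Finset.range (k+1).val, c' ((j : ZMod m) + 1) α := by
          have : ∀ p q s : ZMod 2, (p + q) + (p + s) = q + s := by decide
          exact this _ _ _
      _ = c' (k + 1) α + (if k + 1 = 0 then e' α else 0) := by
          rw [hcyc, he'def]
  have hd2' : ∀ (k : ZMod m) (α : A),
      d' (k - 1) α + d' k α = c' k α + (if k = 0 then e' α else 0) := by
    intro k α
    have := hd' (k - 1) α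
    rwa [sub_add_cancel] at this
  -- corrected even layers (X side) and odd layers (Z side)
  set tAE : ZMod m → ι' → ZMod 2 :=
    fun l => (fun j => a (Sum.inr (l, j))) + ∑ i, d l i • x' i with htAEdef
  set tBO : ZMod m → ι → ZMod 2 :=
    fun l => (fun j => b (Sum.inl (l, j))) + ∑ α, d' l α • z α with htBOdef
  have hAE : ∀ (k : ZMod m) (α : A), dotp (tAE k) (z' α)
      = dotp (fun j => a (Sum.inr (k, j))) (z' α) + ∑ i, d k i * dotp (x' i) (z' α) := by
    intro k α
    rw [htAEdef]
    simp only []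
    rw [dotp_add_left, dotp_sum_left]
    simp_rw [dotp_smul_left]
  have hBO : ∀ (k : ZMod m) (i : I), dotp (tBO k) (x i)
      = dotp (fun j => b (Sum.inl (k, j))) (x i) + ∑ α, d' k α * dotp (z α) (x i) := by
    intro k i
    rw [htBOdef]
    simp only []
    rw [dotp_add_left, dotp_sum_left]
    simp_rw [dotp_smul_left]
  have haO : ∀ (k : ZMod m) (α : A), dotp (fun j => a (Sum.inl (k, j))) (z α)
      = ∑ i, c k i * dotp (x i) (z α) := by
    intro k α
    rw [hc k, dotp_sum_left]
    simp_rw [dotp_smul_left]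
  have hrz' : ∀ α : A, dotp r (z α) = ∑ i, e i * dotp (x i) (z α) := by
    intro α
    rw [hrdef, dotp_sum_left]
    simp_rw [dotp_smul_left]
  have heB : ∀ (k : ZMod m) (i : I), dotp (fun j => b (Sum.inr (k, j))) (x' i)
      = ∑ α, c' k α * dotp (z α) (x i) := by
    intro k i
    rw [hc' k, dotp_sum_left]
    simp_rw [dotp_smul_left]
    exact Finset.sum_congr rfl fun α _ => by
      rw [dotp_comm (z' α) (x' i), hdd i α, dotp_comm (x i) (z α)]
  have hr'x : ∀ i : I, dotp r' (x' i) = ∑ α, e' α * dotp (z α) (x i) := by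
    intro i
    rw [hr'def, dotp_sum_left]
    simp_rw [dotp_smul_left]
    exact Finset.sum_congr rfl fun α _ => by
      rw [dotp_comm (z' α) (x' i), hdd i α, dotp_comm (x i) (z α)]
  -- the F recursion (X side)
  have hFstep : ∀ (k : ZMod m) (α : A),
      dotp (tAE k) (z' α) + dotp (tAE (k + 1)) (z' α)
        = (if k + 1 = 0 then dotp r (z α) else 0) := by
    intro k α
    rw [hAE k α, hAE (k + 1) α, hrz' α]
    have hs1 := star1 α k
    have hs1' : dotp (fun j => a (Sum.inr (k, j))) (z' α)
        + dotp (fun j => a (Sum.inr (k + 1, j))) (z' α)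
        = ∑ i, c k i * dotp (x i) (z α) := by
      rw [← haO k α]
      exact z2a _ _ _ hs1
    have hsum : (∑ i, d k i * dotp (x' i) (z' α)) + ∑ i, d (k + 1) i * dotp (x' i) (z' α)
        = (∑ i, c k i * dotp (x i) (z α))
          + (if k + 1 = 0 then ∑ i, e i * dotp (x i) (z α) else 0) := by
      rw [← Finset.sum_add_distrib]
      have hterm : ∀ i : I, d k i * dotp (x' i) (z' α) + d (k + 1) i * dotp (x' i) (z' α)
          = c k i * dotp (x i) (z α) + (if k + 1 = 0 then e i * dotp (x i) (z α) else 0) := by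
        intro i
        rw [hdd i α, ← add_mul, hd k i]
        split <;> ring
      rw [Finset.sum_congr rfl fun i _ => hterm i, Finset.sum_add_distrib]
      congr 1
      split <;> simp
    calc (dotp (fun j => a (Sum.inr (k, j))) (z' α) + ∑ i, d k i * dotp (x' i) (z' α))
          + (dotp (fun j => a (Sum.inr (k + 1, j))) (z' α)
            + ∑ i, d (k + 1) i * dotp (x' i) (z' α))
        = (dotp (fun j => a (Sum.inr (k, j))) (z' α)
            + dotp (fun j => a (Sum.inr (k + 1, j))) (z' α))
          + ((∑ i, d k i * dotp (x' i) (z' α)) + ∑ i, d (k + 1) i * dotp (x' i) (z' α)) := by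
          ring
      _ = (∑ i, c k i * dotp (x i) (z α))
          + ((∑ i, c k i * dotp (x i) (z α))
            + (if k + 1 = 0 then ∑ i, e i * dotp (x i) (z α) else 0)) := by
          rw [hs1', hsum]
      _ = (if k + 1 = 0 then ∑ i, e i * dotp (x i) (z α) else 0) := z2b _ _
  have hrz : ∀ α : A, dotp r (z α) = 0 := by
    intro α
    have hsum : ∑ k : ZMod m, (dotp (tAE k) (z' α) + dotp (tAE (k + 1)) (z' α))
        = ∑ k : ZMod m, (if k + 1 = 0 then dotp r (z α) else 0) :=
      Finset.sum_congr rfl fun k _ => hFstep k α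
    rw [Finset.sum_add_distrib, sum_indicator_neg_one] at hsum
    have hre : ∑ k : ZMod m, dotp (tAE (k + 1)) (z' α) = ∑ k : ZMod m, dotp (tAE k) (z' α) :=
      Fintype.sum_equiv (Equiv.addRight 1) _ _ (fun k => rfl)
    rw [hre] at hsum
    rw [← hsum]
    exact z2c _
  have hF : ∀ (l : ZMod m) (α : A), dotp (tAE l) (z' α) = 0 := by
    intro l α
    have hstep : ∀ k : ZMod m, dotp (tAE (k + 1)) (z' α) = dotp (tAE k) (z' α) := by
      intro k
      have h0 := hFstep k α
      rw [hrz α] at h0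
      simp only [ite_self] at h0
      exact z2d _ _ h0
    have hconst := zmod_const (fun k => dotp (tAE k) (z' α)) hstep l
    rw [hconst, hAE 0 α]
    have h0 := congrFun ht α
    simp only [Finset.sum_apply, Pi.smul_apply, smul_eq_mul] at h0
    rw [h0]
    have hd0 : ∀ i : I, d (0 : ZMod m) i = t i := by
      intro i
      rw [hddef]
      simp [ZMod.val_zero]
    have hsc : ∑ i, d (0 : ZMod m) i * dotp (x' i) (z' α) = ∑ i, t i * dotp (x' i) (z' α) :=
      Finset.sum_congr rfl fun i _ => by rw [hd0 i]
    rw [hsc]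
    exact z2c _
  -- the G recursion (Z side)
  have hGstep : ∀ (k : ZMod m) (i : I),
      dotp (tBO k) (x i) + dotp (tBO (k + 1)) (x i)
        = (if k + 1 = 0 then dotp r' (x' i) else 0) := by
    intro k i
    rw [hBO k i, hBO (k + 1) i, hr'x i]
    have hs2 := star2 i (k + 1)
    rw [add_sub_cancel_right] at hs2
    have hs2' : dotp (fun j => b (Sum.inl (k, j))) (x i)
        + dotp (fun j => b (Sum.inl (k + 1, j))) (x i)
        = ∑ α, c' (k + 1) α * dotp (z α) (x i) := by
      rw [← heB (k + 1) i]
      exact z2a _ _ _ hs2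
    have hsum : (∑ α, d' k α * dotp (z α) (x i)) + ∑ α, d' (k + 1) α * dotp (z α) (x i)
        = (∑ α, c' (k + 1) α * dotp (z α) (x i))
          + (if k + 1 = 0 then ∑ α, e' α * dotp (z α) (x i) else 0) := by
      rw [← Finset.sum_add_distrib]
      have hterm : ∀ α : A, d' k α * dotp (z α) (x i) + d' (k + 1) α * dotp (z α) (x i)
          = c' (k + 1) α * dotp (z α) (x i)
            + (if k + 1 = 0 then e' α * dotp (z α) (x i) else 0) := by
        intro α
        rw [← add_mul, hd' k α]
        split <;> ring
      rw [Finset.sum_congr rfl fun α _ => hterm α, Finset.sum_add_distrib]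
      congr 1
      split <;> simp
    calc (dotp (fun j => b (Sum.inl (k, j))) (x i) + ∑ α, d' k α * dotp (z α) (x i))
          + (dotp (fun j => b (Sum.inl (k + 1, j))) (x i)
            + ∑ α, d' (k + 1) α * dotp (z α) (x i))
        = (dotp (fun j => b (Sum.inl (k, j))) (x i)
            + dotp (fun j => b (Sum.inl (k + 1, j))) (x i))
          + ((∑ α, d' k α * dotp (z α) (x i)) + ∑ α, d' (k + 1) α * dotp (z α) (x i)) := by
          ring
      _ = (∑ α, c' (k + 1) α * dotp (z α) (x i))
          + ((∑ α, c' (k + 1) α * dotp (z α) (x i))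
            + (if k + 1 = 0 then ∑ α, e' α * dotp (z α) (x i) else 0)) := by
          rw [hs2', hsum]
      _ = (if k + 1 = 0 then ∑ α, e' α * dotp (z α) (x i) else 0) := z2b _ _
  have hrx' : ∀ i : I, dotp r' (x' i) = 0 := by
    intro i
    have hsum : ∑ k : ZMod m, (dotp (tBO k) (x i) + dotp (tBO (k + 1)) (x i))
        = ∑ k : ZMod m, (if k + 1 = 0 then dotp r' (x' i) else 0) :=
      Finset.sum_congr rfl fun k _ => hGstep k i
    rw [Finset.sum_add_distrib, sum_indicator_neg_one] at hsum
    have hre : ∑ k : ZMod m, dotp (tBO (k + 1)) (x i) = ∑ k : ZMod m, dotp (tBO k) (x i) :=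
      Fintype.sum_equiv (Equiv.addRight 1) _ _ (fun k => rfl)
    rw [hre] at hsum
    rw [← hsum]
    exact z2c _
  have hG : ∀ (l : ZMod m) (i : I), dotp (tBO l) (x i) = 0 := by
    intro l i
    have hstep : ∀ k : ZMod m, dotp (tBO (k + 1)) (x i) = dotp (tBO k) (x i) := by
      intro k
      have h0 := hGstep k i
      rw [hrx' i] at h0
      simp only [ite_self] at h0
      exact z2d _ _ h0
    have hconst := zmod_const (fun k => dotp (tBO k) (x i)) hstep l
    rw [hconst, hBO 0 i]
    have h0 := congrFun ht' i
    simp only [Finset.sum_apply, Pi.smul_apply, smul_eq_mul] at h0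
    rw [h0]
    have hd0 : ∀ α : A, d' (0 : ZMod m) α = t' α := by
      intro α
      rw [hd'def]
      simp [ZMod.val_zero]
    have hsc : ∑ α, d' (0 : ZMod m) α * dotp (z α) (x i) = ∑ α, t' α * dotp (z α) (x i) :=
      Finset.sum_congr rfl fun α _ => by rw [hd0 α]
    rw [hsc]
    exact z2c _
  -- the decomposition of a
  have ha : a = (∑ l : ZMod m, ∑ i : I,
        d l i • (atOdd (l - 1) (x i) + atEven l (x' i) + atOdd l (x i) : BulkQ m ι ι' → ZMod 2))
      + ((atOdd (-1 : ZMod m) r : BulkQ m ι ι' → ZMod 2)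
        + ∑ l : ZMod m, (atEven l (tAE l) : BulkQ m ι ι' → ZMod 2)) := by
    funext q
    cases q with
    | inl p =>
      obtain ⟨k, j⟩ := p
      simp only [Pi.add_apply, Finset.sum_apply, Pi.smul_apply, smul_eq_mul, atOdd, atEven,
        add_zero, zero_add, mul_zero, Finset.sum_const_zero]
      rw [Finset.sum_comm]
      have hterm : ∀ i : I, (∑ l : ZMod m,
          d l i * ((if k = l - 1 then x i j else 0) + (if k = l then x i j else 0)))
          = d (k + 1) i * x i j + d k i * x i j := by
        intro i
        have hper : ∀ l : ZMod m,
            d l i * ((if k = l - 1 then x i j else 0) + (if k = l then x i j else 0))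
            = (if l = k + 1 then d l i * x i j else 0) + (if l = k then d l i * x i j else 0) := by
          intro l
          have hc1 : (k = l - 1) = (l = k + 1) :=
            propext ⟨fun h => by rw [h]; ring, fun h => by rw [h]; ring⟩
          have hc2 : (k = l) = (l = k) := propext eq_comm
          simp only [hc1, hc2]
          split <;> split <;> ring
        rw [Finset.sum_congr rfl fun l _ => hper l, Finset.sum_add_distrib,
          Finset.sum_ite_eq', Finset.sum_ite_eq']
        simp
      rw [Finset.sum_congr rfl fun i _ => hterm i]
      have hAkj : a (Sum.inl (k, j)) = ∑ i, c k i * x i j := by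
        have h0 := congrFun (hc k) j
        simpa [Finset.sum_apply, Pi.smul_apply, smul_eq_mul] using h0
      have hrj : r j = ∑ i, e i * x i j := by
        rw [hrdef]
        simp [Finset.sum_apply, Pi.smul_apply, smul_eq_mul]
      have hterm2 : ∀ i : I, d (k + 1) i * x i j + d k i * x i j
          = c k i * x i j + (if k + 1 = 0 then e i * x i j else 0) := by
        intro i
        have h1 : d (k + 1) i + d k i = c k i + (if k + 1 = 0 then e i else 0) := by
          rw [add_comm]; exact hd k i
        rw [← add_mul, h1]
        split <;> ring
      rw [Finset.sum_congr rfl fun i _ => hterm2 i, Finset.sum_add_distrib, ← hAkj]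
      by_cases hk : k + 1 = 0
      · have hk' : k = -1 := eq_neg_of_add_eq_zero_left hk
        rw [if_pos hk']
        have hsum0 : ∑ i, (if k + 1 = 0 then e i * x i j else 0) = ∑ i, e i * x i j :=
          Finset.sum_congr rfl fun i _ => if_pos hk
        rw [hsum0, hrj]
        exact z2e _ _
      · have hk' : ¬ (k = (-1 : ZMod m)) := fun h => hk (by rw [h]; ring)
        rw [if_neg hk']
        have hsum0 : ∑ i, (if k + 1 = 0 then e i * x i j else 0) = ∑ i, (0 : ZMod 2) :=
          Finset.sum_congr rfl fun i _ => if_neg hk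
        rw [hsum0]
        simp
    | inr p =>
      obtain ⟨k, j⟩ := p
      simp only [Pi.add_apply, Finset.sum_apply, Pi.smul_apply, smul_eq_mul, atOdd, atEven,
        add_zero, zero_add, mul_zero, Finset.sum_const_zero]
      rw [Finset.sum_comm]
      have hterm : ∀ i : I, (∑ l : ZMod m, d l i * (if k = l then x' i j else 0))
          = d k i * x' i j := by
        intro i
        have hper : ∀ l : ZMod m, d l i * (if k = l then x' i j else 0)
            = (if l = k then d l i * x' i j else 0) := by
          intro l
          simp only [propext (eq_comm (a := k) (b := l))]
          split <;> ring
        rw [Finset.sum_congr rfl fun l _ => hper l, Finset.sum_ite_eq']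
        simp
      rw [Finset.sum_congr rfl fun i _ => hterm i]
      have hsumE : ∑ l : ZMod m, (if k = l then tAE l j else 0) = tAE k j := by
        have hper : ∀ l : ZMod m, (if k = l then tAE l j else 0)
            = (if l = k then tAE l j else 0) := by
          intro l
          simp only [propext (eq_comm (a := k) (b := l))]
        rw [Finset.sum_congr rfl fun l _ => hper l, Finset.sum_ite_eq']
        simp
      rw [hsumE, htAEdef]
      simp only [Pi.add_apply, Finset.sum_apply, Pi.smul_apply, smul_eq_mul]
      exact z2f _ _
  -- the decomposition of b
  have hb : b = (∑ l : ZMod m, ∑ α : A,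
        d' l α • (atEven l (z' α) + atOdd l (z α) + atEven (l + 1) (z' α) : BulkQ m ι ι' → ZMod 2))
      + ((atEven (0 : ZMod m) r' : BulkQ m ι ι' → ZMod 2)
        + ∑ l : ZMod m, (atOdd l (tBO l) : BulkQ m ι ι' → ZMod 2)) := by
    funext q
    cases q with
    | inr p =>
      obtain ⟨k, j⟩ := p
      simp only [Pi.add_apply, Finset.sum_apply, Pi.smul_apply, smul_eq_mul, atOdd, atEven,
        add_zero, zero_add, mul_zero, Finset.sum_const_zero]
      rw [Finset.sum_comm]
      have hterm : ∀ α : A, (∑ l : ZMod m,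
          d' l α * ((if k = l then z' α j else 0) + (if k = l + 1 then z' α j else 0)))
          = d' k α * z' α j + d' (k - 1) α * z' α j := by
        intro α
        have hper : ∀ l : ZMod m,
            d' l α * ((if k = l then z' α j else 0) + (if k = l + 1 then z' α j else 0))
            = (if l = k then d' l α * z' α j else 0) + (if l = k - 1 then d' l α * z' α j else 0) := by
          intro l
          have hc1 : (k = l) = (l = k) := propext eq_comm
          have hc2 : (k = l + 1) = (l = k - 1) :=
            propext ⟨fun h => by rw [h]; ring, fun h => by rw [h]; ring⟩
          simp only [hc1, hc2]
          split <;> split <;> ring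
        rw [Finset.sum_congr rfl fun l _ => hper l, Finset.sum_add_distrib,
          Finset.sum_ite_eq', Finset.sum_ite_eq']
        simp
      rw [Finset.sum_congr rfl fun α _ => hterm α]
      have hBkj : b (Sum.inr (k, j)) = ∑ α, c' k α * z' α j := by
        have h0 := congrFun (hc' k) j
        simpa [Finset.sum_apply, Pi.smul_apply, smul_eq_mul] using h0
      have hr'j : r' j = ∑ α, e' α * z' α j := by
        rw [hr'def]
        simp [Finset.sum_apply, Pi.smul_apply, smul_eq_mul]
      have hterm2 : ∀ α : A, d' k α * z' α j + d' (k - 1) α * z' α j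
          = c' k α * z' α j + (if k = 0 then e' α * z' α j else 0) := by
        intro α
        have h1 : d' k α + d' (k - 1) α = c' k α + (if k = 0 then e' α else 0) := by
          rw [add_comm]; exact hd2' k α
        rw [← add_mul, h1]
        split <;> ring
      rw [Finset.sum_congr rfl fun α _ => hterm2 α, Finset.sum_add_distrib, ← hBkj]
      by_cases hk : k = 0
      · rw [if_pos hk]
        have hsum0 : ∑ α, (if k = 0 then e' α * z' α j else 0) = ∑ α, e' α * z' α j :=
          Finset.sum_congr rfl fun α _ => if_pos hk
        rw [hsum0, hr'j]
        exact z2e _ _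
      · rw [if_neg hk]
        have hsum0 : ∑ α, (if k = 0 then e' α * z' α j else 0) = ∑ α, (0 : ZMod 2) :=
          Finset.sum_congr rfl fun α _ => if_neg hk
        rw [hsum0]
        simp
    | inl p =>
      obtain ⟨k, j⟩ := p
      simp only [Pi.add_apply, Finset.sum_apply, Pi.smul_apply, smul_eq_mul, atOdd, atEven,
        add_zero, zero_add, mul_zero, Finset.sum_const_zero]
      rw [Finset.sum_comm]
      have hterm : ∀ α : A, (∑ l : ZMod m, d' l α * (if k = l then z α j else 0))
          = d' k α * z α j := by
        intro α
        have hper : ∀ l : ZMod m, d' l α * (if k = l then z α j else 0)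
            = (if l = k then d' l α * z α j else 0) := by
          intro l
          simp only [propext (eq_comm (a := k) (b := l))]
          split <;> ring
        rw [Finset.sum_congr rfl fun l _ => hper l, Finset.sum_ite_eq']
        simp
      rw [Finset.sum_congr rfl fun α _ => hterm α]
      have hsumO : ∑ l : ZMod m, (if k = l then tBO l j else 0) = tBO k j := by
        have hper : ∀ l : ZMod m, (if k = l then tBO l j else 0)
            = (if l = k then tBO l j else 0) := by
          intro l
          simp only [propext (eq_comm (a := k) (b := l))]
        rw [Finset.sum_congr rfl fun l _ => hper l, Finset.sum_ite_eq']
        simp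
      rw [hsumO, htBOdef]
      simp only [Pi.add_apply, Finset.sum_apply, Pi.smul_apply, smul_eq_mul]
      exact z2f _ _
  -- memberships of the pieces
  have memXsusp : ∀ (i : I) (l : ZMod m),
      Xop (atOdd (l - 1) (x i) + atEven l (x' i) + atOdd l (x i) : BulkQ m ι ι' → ZMod 2)
        ∈ periodicBulkSet m ι ι' A I z x z' x' := fun i l => Or.inr (Or.inl ⟨i, l, rfl⟩)
  have memXr : Xop (atOdd (-1 : ZMod m) r : BulkQ m ι ι' → ZMod 2)
      ∈ periodicBulkSet m ι ι' A I z x z' x' := by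
    refine Or.inr (Or.inr (Or.inr (Or.inl ⟨-1, r, hrz, ?_, rfl⟩)))
    intro v hv
    rw [hrdef, dotp_sum_left]
    simp_rw [dotp_smul_left]
    refine Finset.sum_eq_zero fun i _ => ?_
    rw [dotp_comm (x i) v, hv i, mul_zero]
  have memXeven : ∀ l : ZMod m, Xop (atEven l (tAE l) : BulkQ m ι ι' → ZMod 2)
      ∈ periodicBulkSet m ι ι' A I z x z' x' :=
    fun l => Or.inr (Or.inr (Or.inr (Or.inr (Or.inl ⟨l, tAE l, fun α => hF l α, rfl⟩))))
  have memZsusp : ∀ (α : A) (l : ZMod m),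
      Zop (atEven l (z' α) + atOdd l (z α) + atEven (l + 1) (z' α) : BulkQ m ι ι' → ZMod 2)
        ∈ periodicBulkSet m ι ι' A I z x z' x' := fun α l => Or.inl ⟨α, l, rfl⟩
  have memZr' : Zop (atEven (0 : ZMod m) r' : BulkQ m ι ι' → ZMod 2)
      ∈ periodicBulkSet m ι ι' A I z x z' x' := by
    refine Or.inr (Or.inr (Or.inr (Or.inr (Or.inr ⟨0, r', ?_, hrx', rfl⟩))))
    rw [hr'def]
    exact Submodule.sum_smul_mem _ _ (fun α _ => Submodule.subset_span ⟨α, rfl⟩)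
  have memZodd : ∀ l : ZMod m, Zop (atOdd l (tBO l) : BulkQ m ι ι' → ZMod 2)
      ∈ periodicBulkSet m ι ι' A I z x z' x' :=
    fun l => Or.inr (Or.inr (Or.inl ⟨l, tBO l, fun i => hG l i, rfl⟩))
  -- assemble the product
  have PA : PaProd (periodicBulkSet m ι ι' A I z x z' x') a 0 := by
    have P1 : PaProd (periodicBulkSet m ι ι' A I z x z' x')
        (∑ l : ZMod m, ∑ i : I,
          d l i • (atOdd (l - 1) (x i) + atEven l (x' i) + atOdd l (x i) : BulkQ m ι ι' → ZMod 2))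
        0 := by
      have hin : ∀ l : ZMod m, PaProd (periodicBulkSet m ι ι' A I z x z' x')
          (∑ i : I, d l i • (atOdd (l - 1) (x i) + atEven l (x' i) + atOdd l (x i)
            : BulkQ m ι ι' → ZMod 2)) 0 := by
        intro l
        have h2 := PaProd_sum (periodicBulkSet m ι ι' A I z x z' x') Finset.univ
          (fun i : I => d l i • (atOdd (l - 1) (x i) + atEven l (x' i) + atOdd l (x i)
            : BulkQ m ι ι' → ZMod 2))
          (fun _ => (0 : BulkQ m ι ι' → ZMod 2)) ?_
        · simpa using h2
        · intro i _
          rcases zmod2_cases (d l i) with h | h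
          · rw [h, zero_smul]; exact PaProd_zero _
          · rw [h, one_smul]; exact PaProd_X _ (memXsusp i l)
      have h3 := PaProd_sum (periodicBulkSet m ι ι' A I z x z' x') Finset.univ
        (fun l : ZMod m => ∑ i : I, d l i • (atOdd (l - 1) (x i) + atEven l (x' i) + atOdd l (x i)
          : BulkQ m ι ι' → ZMod 2))
        (fun _ => (0 : BulkQ m ι ι' → ZMod 2)) (fun l _ => hin l)
      simpa using h3
    have P2 : PaProd (periodicBulkSet m ι ι' A I z x z' x')
        (atOdd (-1 : ZMod m) r : BulkQ m ι ι' → ZMod 2) 0 := PaProd_X _ memXr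
    have P3 : PaProd (periodicBulkSet m ι ι' A I z x z' x')
        (∑ l : ZMod m, (atEven l (tAE l) : BulkQ m ι ι' → ZMod 2)) 0 := by
      have h3 := PaProd_sum (periodicBulkSet m ι ι' A I z x z' x') Finset.univ
        (fun l : ZMod m => (atEven l (tAE l) : BulkQ m ι ι' → ZMod 2))
        (fun _ => (0 : BulkQ m ι ι' → ZMod 2)) (fun l _ => PaProd_X _ (memXeven l))
      simpa using h3
    have h := PaProd_add _ P1 (PaProd_add _ P2 P3)
    rw [ha]
    simpa only [add_zero] using h
  have PB : PaProd (periodicBulkSet m ι ι' A I z x z' x') 0 b := by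
    have P1 : PaProd (periodicBulkSet m ι ι' A I z x z' x') 0
        (∑ l : ZMod m, ∑ α : A,
          d' l α • (atEven l (z' α) + atOdd l (z α) + atEven (l + 1) (z' α)
            : BulkQ m ι ι' → ZMod 2)) := by
      have hin : ∀ l : ZMod m, PaProd (periodicBulkSet m ι ι' A I z x z' x') 0
          (∑ α : A, d' l α • (atEven l (z' α) + atOdd l (z α) + atEven (l + 1) (z' α)
            : BulkQ m ι ι' → ZMod 2)) := by
        intro l
        have h2 := PaProd_sum (periodicBulkSet m ι ι' A I z x z' x') Finset.univ
          (fun _ => (0 : BulkQ m ι ι' → ZMod 2))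
          (fun α : A => d' l α • (atEven l (z' α) + atOdd l (z α) + atEven (l + 1) (z' α)
            : BulkQ m ι ι' → ZMod 2)) ?_
        · simpa using h2
        · intro α _
          rcases zmod2_cases (d' l α) with h | h
          · rw [h, zero_smul]; exact PaProd_zero _
          · rw [h, one_smul]; exact PaProd_Z _ (memZsusp α l)
      have h3 := PaProd_sum (periodicBulkSet m ι ι' A I z x z' x') Finset.univ
        (fun _ => (0 : BulkQ m ι ι' → ZMod 2))
        (fun l : ZMod m => ∑ α : A,
          d' l α • (atEven l (z' α) + atOdd l (z α) + atEven (l + 1) (z' α)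
            : BulkQ m ι ι' → ZMod 2)) (fun l _ => hin l)
      simpa using h3
    have P2 : PaProd (periodicBulkSet m ι ι' A I z x z' x') 0
        (atEven (0 : ZMod m) r' : BulkQ m ι ι' → ZMod 2) := PaProd_Z _ memZr'
    have P3 : PaProd (periodicBulkSet m ι ι' A I z x z' x') 0
        (∑ l : ZMod m, (atOdd l (tBO l) : BulkQ m ι ι' → ZMod 2)) := by
      have h3 := PaProd_sum (periodicBulkSet m ι ι' A I z x z' x') Finset.univ
        (fun _ => (0 : BulkQ m ι ι' → ZMod 2))
        (fun l : ZMod m => (atOdd l (tBO l) : BulkQ m ι ι' → ZMod 2))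
        (fun l _ => PaProd_Z _ (memZodd l))
      simpa using h3
    have h := PaProd_add _ P1 (PaProd_add _ P2 P3)
    rw [hb]
    simpa only [add_zero] using h
  have PAB := PaProd_add _ PA PB
  simp only [add_zero, zero_add] at PAB
  obtain ⟨ε, hε, L, hL, hp⟩ := PAB
  exact ⟨ε, hε, L, hL, hp⟩
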